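/- Let ℓ_1,...,ℓ_N be nonnegative real numbers (per-sample losses), and let G_1,...,G_K be a partition of {1,...,N} such that every group G_k has size at least Nα, where 0 < α ≤ 1 and Nα is a positive integer. Then the maximum over k of the average loss over G_k is at most the average of the Nα largest losses, i.e., max_k (1/|G_k|) Σ_{i∈G_k} ℓ_i ≤ (1/(Nα)) Σ_{i=1}^{Nα} ℓ^{(i)}, where ℓ^{(1)} ≥ ℓ^{(2)} ≥ ... are the losses sorted in decreasing order. -/
import Mathlib


/-- The worst-group average loss is bounded by the average of the `m` largest losses,
provided every group has size at least `m`. Here `σ` is a permutation sorting the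
losses in decreasing order. -/
theorem worst_group_avg_le_top_m_avg (N K m : ℕ) (hN : 0 < N) (hm : 0 < m)
    (ℓ : Fin N → ℝ) (hℓ : ∀ i, 0 ≤ ℓ i)
    (G : Fin K → Finset (Fin N))
    (hGne : ∀ k, (G k).Nonempty)
    (hGdisj : ∀ k k', k ≠ k' → Disjoint (G k) (G k'))
    (hGcover : Finset.univ.biUnion G = Finset.univ)
    (hGsize : ∀ k, m ≤ (G k).card)
    (σ : Equiv.Perm (Fin N))
    (hσ : ∀ i j : Fin N, i ≤ j → ℓ (σ j) ≤ ℓ (σ i)) :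
    ∀ k : Fin K,
      (1 / ((G k).card : ℝ)) * ∑ i ∈ G k, ℓ i ≤
        (1 / (m : ℝ)) * ∑ i ∈ Finset.univ.filter (fun i : Fin N => (i : ℕ) < m), ℓ (σ i) := by
  intro k
  set S : Finset (Fin N) := G k with hS
  have hmS : m ≤ S.card := hGsize k
  have hSN : S.card ≤ N := by
    simpa using Finset.card_le_card (Finset.subset_univ S)
  have hmN : m ≤ N := le_trans hmS hSN
  have hidx : m - 1 < N := lt_of_lt_of_le (Nat.sub_lt hm one_pos) hmN
  set F : Finset (Fin N) := Finset.univ.filter (fun i : Fin N => (i : ℕ) < m) with hF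
  set Top : Finset (Fin N) := F.image σ with hTop
  -- sum over filter equals sum over Top
  have hsum_eq : ∑ i ∈ F, ℓ (σ i) = ∑ i ∈ Top, ℓ i := by
    rw [hTop, Finset.sum_image (fun x _ y _ h => σ.injective h)]
  have hcardF : F.card = m := by
    rw [hF]
    have : (Finset.univ.filter (fun i : Fin N => (i : ℕ) < m)) =
        (Finset.univ : Finset (Fin m)).map (Fin.castLEEmb hmN) := by
      ext i
      simp [Fin.castLEEmb, Fin.castLE]
      constructor
      · intro h; exact ⟨⟨i, h⟩, rfl⟩
      · rintro ⟨j, rfl⟩; exact j.isLt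
    rw [this]; simp
  have hcardTop : Top.card = m := by
    rw [hTop, Finset.card_image_of_injective _ σ.injective, hcardF]
  -- threshold
  set j0 : Fin N := ⟨m - 1, hidx⟩ with hj0
  set t : ℝ := ℓ (σ j0) with ht
  have ht0 : 0 ≤ t := hℓ _
  have hTop_ge : ∀ i ∈ Top, t ≤ ℓ i := by
    intro i hi
    rw [hTop, Finset.mem_image] at hi
    obtain ⟨j, hj, rfl⟩ := hi
    rw [hF, Finset.mem_filter] at hj
    obtain ⟨-, hj2⟩ := hj
    refine hσ j j0 ?_
    rw [Fin.le_def, hj0]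
    show (j : ℕ) ≤ m - 1
    omega
  have hnotTop_le : ∀ i : Fin N, i ∉ Top → ℓ i ≤ t := by
    intro i hi
    have hji : σ (σ.symm i) = i := σ.apply_symm_apply i
    have : ¬ ((σ.symm i : ℕ) < m) := by
      intro hlt
      apply hi
      rw [hTop, Finset.mem_image]
      exact ⟨σ.symm i, by rw [hF]; simp [hlt], hji⟩
    calc ℓ i = ℓ (σ (σ.symm i)) := by rw [hji]
    _ ≤ t := by
      refine hσ j0 (σ.symm i) ?_
      rw [Fin.le_def, hj0]
      show m - 1 ≤ ((σ.symm i : Fin N) : ℕ)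
      omega
  -- real abbreviations
  set s : ℝ := (S.card : ℝ) with hs
  have hs_pos : (0:ℝ) < s := by
    rw [hs]; exact_mod_cast lt_of_lt_of_le hm hmS
  have hm_pos : (0:ℝ) < (m:ℝ) := by exact_mod_cast hm
  set a : ℝ := ((S ∩ Top).card : ℝ) with ha
  -- split sums
  have hsplitS : ∑ i ∈ S, ℓ i = ∑ i ∈ S ∩ Top, ℓ i + ∑ i ∈ S \ Top, ℓ i := by
    rw [Finset.sum_inter_add_sum_sdiff]
  have hsplitT : ∑ i ∈ Top, ℓ i = ∑ i ∈ Top ∩ S, ℓ i + ∑ i ∈ Top \ S, ℓ i := by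
    rw [Finset.sum_inter_add_sum_sdiff]
  have hTS : ∑ i ∈ Top ∩ S, ℓ i = ∑ i ∈ S ∩ Top, ℓ i := by rw [Finset.inter_comm]
  -- card identities in ℝ
  have hcard1 : ((S \ Top).card : ℝ) = s - a := by
    have := Finset.card_sdiff_add_card_inter S Top
    rw [hs, ha]; push_cast [← this]; ring
  have hcard2 : ((Top \ S).card : ℝ) = (m : ℝ) - a := by
    have h := Finset.card_sdiff_add_card_inter Top S
    rw [hcardTop, Finset.inter_comm] at h
    rw [ha]; push_cast [← h]; ring
  -- bound pieces
  have hA : a * t ≤ ∑ i ∈ S ∩ Top, ℓ i := by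
    have := Finset.card_nsmul_le_sum (S ∩ Top) ℓ t
      (fun i hi => hTop_ge i (Finset.mem_of_mem_inter_right hi))
    rw [nsmul_eq_mul] at this; rw [ha]; exact this
  have hB : ∑ i ∈ S \ Top, ℓ i ≤ (s - a) * t := by
    have := Finset.sum_le_card_nsmul (S \ Top) ℓ t
      (fun i hi => hnotTop_le i ((Finset.mem_sdiff.mp hi).2))
    rw [nsmul_eq_mul] at this; rw [← hcard1]; exact this
  have hC : ((m:ℝ) - a) * t ≤ ∑ i ∈ Top \ S, ℓ i := by
    have := Finset.card_nsmul_le_sum (Top \ S) ℓ t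
      (fun i hi => hTop_ge i (Finset.mem_sdiff.mp hi).1)
    rw [nsmul_eq_mul, hcard2] at this; exact this
  have hA0 : 0 ≤ ∑ i ∈ S ∩ Top, ℓ i :=
    Finset.sum_nonneg (fun i _ => hℓ i)
  have hms : (m:ℝ) ≤ s := by rw [hs]; exact_mod_cast hmS
  have ha0 : 0 ≤ a := by rw [ha]; positivity
  -- main inequality
  have key : (m:ℝ) * ∑ i ∈ S, ℓ i ≤ s * ∑ i ∈ Top, ℓ i := by
    rw [hsplitS, hsplitT, hTS]
    nlinarith [mul_le_mul_of_nonneg_left hB hm_pos.le,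
      mul_le_mul_of_nonneg_left hC hs_pos.le,
      mul_le_mul_of_nonneg_right hms hA0,
      mul_nonneg (mul_nonneg (sub_nonneg.mpr hms) ha0) ht0,
      mul_le_mul_of_nonneg_left hA (sub_nonneg.mpr hms)]
  rw [hsum_eq, div_mul_eq_mul_div, div_mul_eq_mul_div, div_le_div_iff₀ hs_pos hm_pos]
  nlinarith [key]
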